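/- Combining the previous bounds: if f_θ is L-Lipschitz, e_0 = 0, f_θ(x_{n+1}) = f_θ(x̂_n), f(x_{n+1}) = f(x_n), ‖x̂_n − x_n‖ ≤ C(σ(n+1)−σ(n))^{p+1}, and σ(N) − σ(0) ≤ T, then sup_{0 ≤ n ≤ N} ‖f_θ(x_n) − f(x_n)‖ ≤ L·C·T·Δ^p where Δ = max_n(σ(n+1)−σ(n)). -/
import Mathlib


theorem stmt_10 {d : ℕ} (fθ f : EuclideanSpace ℝ (Fin d) → EuclideanSpace ℝ (Fin d))
    (L C T : ℝ) (hL : 0 ≤ L) (hC : 0 ≤ C) (hT : 0 ≤ T)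
    (hlip : ∀ a b, ‖fθ a - fθ b‖ ≤ L * ‖a - b‖)
    (N : ℕ) (hN : 0 < N) (x xhat : ℕ → EuclideanSpace ℝ (Fin d))
    (σ : ℕ → ℝ) (hσ : Monotone σ) (p : ℕ) (hp : 1 ≤ p)
    (h0 : fθ (x 0) = f (x 0))
    (hnum : ∀ n < N, fθ (x (n + 1)) = fθ (xhat n))
    (hf : ∀ n < N, f (x (n + 1)) = f (x n))
    (herr : ∀ n < N, ‖xhat n - x n‖ ≤ C * (σ (n + 1) - σ n) ^ (p + 1))
    (hrange : σ N - σ 0 ≤ T)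
    (Δ : ℝ)
    (hΔ : Δ = (Finset.range N).sup' (Finset.nonempty_range_iff.mpr hN.ne')
      (fun n => σ (n + 1) - σ n)) :
    ∀ n ≤ N, ‖fθ (x n) - f (x n)‖ ≤ L * C * T * Δ ^ p := by
  have hΔ0 : 0 ≤ Δ := by
    have h1 : σ (0 + 1) - σ 0 ≤ Δ := hΔ ▸ Finset.le_sup'
      (fun n => σ (n + 1) - σ n) (Finset.mem_range.mpr hN)
    have h2 : 0 ≤ σ (0 + 1) - σ 0 := sub_nonneg.mpr (hσ (Nat.le_succ 0))
    linarith
  have hΔp : (0:ℝ) ≤ Δ ^ p := pow_nonneg hΔ0 p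
  have key : ∀ n ≤ N, ‖fθ (x n) - f (x n)‖ ≤ L * C * Δ ^ p * (σ n - σ 0) := by
    intro n
    induction n with
    | zero => intro _; simp [h0]
    | succ n ih =>
      intro hn1
      have hn : n < N := hn1
      have ihn := ih hn.le
      have hinc0 : 0 ≤ σ (n + 1) - σ n := sub_nonneg.mpr (hσ (Nat.le_succ n))
      have hincΔ : σ (n + 1) - σ n ≤ Δ := hΔ ▸ Finset.le_sup'
        (fun n => σ (n + 1) - σ n) (Finset.mem_range.mpr hn)
      have h1 : ‖fθ (x (n + 1)) - f (x (n + 1))‖ ≤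
          ‖fθ (xhat n) - fθ (x n)‖ + ‖fθ (x n) - f (x n)‖ := by
        rw [hnum n hn, hf n hn]
        calc ‖fθ (xhat n) - f (x n)‖
            = ‖(fθ (xhat n) - fθ (x n)) + (fθ (x n) - f (x n))‖ := by abel_nf
          _ ≤ _ := norm_add_le _ _
      have h2 : ‖fθ (xhat n) - fθ (x n)‖ ≤ L * (C * (σ (n + 1) - σ n) ^ (p + 1)) :=
        (hlip _ _).trans (mul_le_mul_of_nonneg_left (herr n hn) hL)
      have h3 : (σ (n + 1) - σ n) ^ (p + 1) ≤ Δ ^ p * (σ (n + 1) - σ n) := by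
        rw [pow_succ]
        exact mul_le_mul_of_nonneg_right (pow_le_pow_left₀ hinc0 hincΔ p) hinc0
      have hLC : (0:ℝ) ≤ L * C := mul_nonneg hL hC
      nlinarith [mul_le_mul_of_nonneg_left h3 hLC]
  intro n hn
  have h1 := key n hn
  have h2 : σ n - σ 0 ≤ T := le_trans (by linarith [hσ hn]) hrange
  have h3 : (0:ℝ) ≤ L * C * Δ ^ p := mul_nonneg (mul_nonneg hL hC) hΔp
  nlinarith [mul_le_mul_of_nonneg_left h2 h3]
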